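/- (Special case of Lemma 2.3 for Laguerre polynomials.) For every nonnegative integer n and all x, ₁F₁(-n; 1; x) = ₂F₃(-n/2, (1-n)/2; 1/2, 1/2, 1; x²/4) − n x · ₂F₃((1-n)/2, (2-n)/2; 3/2, 1, 3/2; x²/4), where all series terminate. Equivalently, Σ_{k=0}^{n} (-n)_k x^k/(k!)² = Σ_{m=0}^{⌊n/2⌋} (-n/2)_m ((1-n)/2)_m (x²/4)^m / ((1/2)_m (1/2)_m (1)_m m!) − n x Σ_{m=0}^{⌊(n-1)/2⌋} ((1-n)/2)_m ((2-n)/2)_m (x²/4)^m / ((3/2)_m (1)_m (3/2)_m m!). -/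

import Mathlib

open Finset

/-- Pochhammer (rising factorial) symbol on the reals. -/
noncomputable def poch (a : ℝ) (n : ℕ) : ℝ := ∏ i ∈ Finset.range n, (a + i)

lemma poch_zero (a : ℝ) : poch a 0 = 1 := by simp [poch]

lemma poch_succ (a : ℝ) (k : ℕ) : poch a (k + 1) = poch a k * (a + k) :=
  Finset.prod_range_succ _ _

lemma poch_succ' (a : ℝ) (k : ℕ) : poch a (k + 1) = a * poch (a + 1) k := by
  rw [poch, Finset.prod_range_succ']
  simp only [Nat.cast_zero, add_zero]
  rw [mul_comm]
  congr 1
  refine Finset.prod_congr rfl fun i _ => ?_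
  push_cast
  ring

lemma poch_one (m : ℕ) : poch 1 m = m.factorial := by
  induction m with
  | zero => simp [poch]
  | succ m ih => rw [poch_succ, ih]; push_cast [Nat.factorial_succ]; ring

lemma poch_double (a : ℝ) (m : ℕ) :
    poch a (2 * m) = 4 ^ m * poch (a / 2) m * poch ((a + 1) / 2) m := by
  induction m with
  | zero => simp [poch]
  | succ m ih =>
    have h : 2 * (m + 1) = (2 * m) + 1 + 1 := by ring
    rw [h, poch_succ, poch_succ, ih, poch_succ, poch_succ]
    push_cast
    ring

lemma fact_even (m : ℕ) :
    ((2 * m).factorial : ℝ) = 4 ^ m * m.factorial * poch (1 / 2) m := by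
  induction m with
  | zero => simp [poch]
  | succ m ih =>
    have h : 2 * (m + 1) = (2 * m) + 1 + 1 := by ring
    rw [h, Nat.factorial_succ, Nat.factorial_succ, poch_succ]
    push_cast [ih, Nat.factorial_succ]
    ring

lemma fact_odd (m : ℕ) :
    ((2 * m + 1).factorial : ℝ) = 4 ^ m * m.factorial * poch (3 / 2) m := by
  induction m with
  | zero => simp [poch]
  | succ m ih =>
    have h : 2 * (m + 1) + 1 = (2 * m + 1) + 1 + 1 := by ring
    rw [h, Nat.factorial_succ, Nat.factorial_succ]
    push_cast
    rw [ih, poch_succ, Nat.factorial_succ]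
    push_cast
    ring

lemma poch_pos {a : ℝ} (ha : 0 < a) (m : ℕ) : 0 < poch a m := by
  refine Finset.prod_pos fun i _ => ?_
  positivity

lemma sum_even_odd (f : ℕ → ℝ) (N : ℕ) :
    ∑ k ∈ Finset.range N, f k =
      (∑ m ∈ Finset.range ((N + 1) / 2), f (2 * m)) +
      (∑ m ∈ Finset.range (N / 2), f (2 * m + 1)) := by
  induction N with
  | zero => simp
  | succ N ih =>
    rw [Finset.sum_range_succ, ih]
    rcases Nat.even_or_odd N with ⟨t, ht⟩ | ⟨t, ht⟩
    · have h1 : (N + 1 + 1) / 2 = N / 2 + 1 := by omega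
      have h2 : (N + 1) / 2 = N / 2 := by omega
      have h3 : 2 * (N / 2) = N := by omega
      rw [h1, h2, Finset.sum_range_succ (fun m => f (2 * m)) (N / 2), h3]
      ring
    · have h1 : (N + 1 + 1) / 2 = (N + 1) / 2 := by omega
      have h2 : (N + 1) / 2 = N / 2 + 1 := by omega
      have h3 : 2 * (N / 2) + 1 = N := by omega
      rw [h1, h2, Finset.sum_range_succ (fun m => f (2 * m + 1)) (N / 2), h3]
      ring

/-- Even/odd splitting of ₁F₁(-n; 1; x): the Laguerre case of Lemma 2.3. -/
theorem oneFone_split (n : ℕ) (x : ℝ) :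
    (∑ k ∈ Finset.range (n + 1), poch (-(n : ℝ)) k * x ^ k / ((k.factorial : ℝ)) ^ 2) =
      (∑ m ∈ Finset.range (n / 2 + 1),
        poch (-(n : ℝ) / 2) m * poch ((1 - (n : ℝ)) / 2) m * (x ^ 2 / 4) ^ m /
          (poch (1 / 2) m * poch (1 / 2) m * poch 1 m * (m.factorial : ℝ))) -
      (n : ℝ) * x *
      (∑ m ∈ Finset.range ((n - 1) / 2 + 1),
        poch ((1 - (n : ℝ)) / 2) m * poch ((2 - (n : ℝ)) / 2) m * (x ^ 2 / 4) ^ m /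
          (poch (3 / 2) m * poch 1 m * poch (3 / 2) m * (m.factorial : ℝ))) := by
  rw [sum_even_odd (fun k => poch (-(n : ℝ)) k * x ^ k / ((k.factorial : ℝ)) ^ 2) (n + 1)]
  have hr : (n + 1 + 1) / 2 = n / 2 + 1 := by omega
  rw [hr]
  have heven : ∀ m : ℕ,
      poch (-(n : ℝ)) (2 * m) * x ^ (2 * m) / (((2 * m).factorial : ℝ)) ^ 2 =
      poch (-(n : ℝ) / 2) m * poch ((1 - (n : ℝ)) / 2) m * (x ^ 2 / 4) ^ m /
        (poch (1 / 2) m * poch (1 / 2) m * poch 1 m * (m.factorial : ℝ)) := by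
    intro m
    have h1 : ((-(n : ℝ)) + 1) / 2 = (1 - (n : ℝ)) / 2 := by ring
    rw [poch_double, fact_even, h1, poch_one, pow_mul]
    have hp : (0 : ℝ) < poch (1 / 2) m := poch_pos (by norm_num) m
    have hf : (0 : ℝ) < (m.factorial : ℝ) := by positivity
    simp only [div_pow]
    field_simp
  have hodd : ∀ m : ℕ,
      poch (-(n : ℝ)) (2 * m + 1) * x ^ (2 * m + 1) / (((2 * m + 1).factorial : ℝ)) ^ 2 =
      -((n : ℝ) * x *
        (poch ((1 - (n : ℝ)) / 2) m * poch ((2 - (n : ℝ)) / 2) m * (x ^ 2 / 4) ^ m /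
          (poch (3 / 2) m * poch 1 m * poch (3 / 2) m * (m.factorial : ℝ)))) := by
    intro m
    have h1 : (-(n : ℝ) + 1) / 2 = (1 - (n : ℝ)) / 2 := by ring
    have h2 : ((-(n : ℝ) + 1) + 1) / 2 = (2 - (n : ℝ)) / 2 := by ring
    rw [poch_succ', poch_double, fact_odd, h1, h2, poch_one, pow_succ, pow_mul]
    have hp : (0 : ℝ) < poch (3 / 2) m := poch_pos (by norm_num) m
    have hf : (0 : ℝ) < (m.factorial : ℝ) := by positivity
    simp only [div_pow]
    field_simp
  rw [Finset.sum_congr rfl (fun m _ => heven m),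
      Finset.sum_congr rfl (fun m _ => hodd m)]
  rw [Finset.sum_neg_distrib]
  rcases Nat.eq_zero_or_pos n with h0 | hpos
  · subst h0
    simp
  · have hr2 : (n + 1) / 2 = (n - 1) / 2 + 1 := by omega
    rw [hr2, Finset.mul_sum]
    ring
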